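/- Let (T,r) be a DFS tree of a finite simple graph G, let v be a vertex with descendant set D_v, and let (T'_v, v) be any DFS tree of the induced subgraph G[D_v] rooted at v. Then the spanning subgraph of G obtained from T by deleting all tree edges with both endpoints in D_v and adding the edges of T'_v is again a spanning tree of G, and rooted at r it is a DFS tree of G. -/

import Mathlib

/-- `u` lies on the unique path in `T` from `r` to `v`
(characterized in a tree via distances). -/
def IsAncestor {V : Type*} (T : SimpleGraph V) (r u v : V) : Prop :=
  T.dist r u + T.dist u v = T.dist r v

/-- `u` and `v` are comparable in the rooted tree `(T, r)`. -/
def TreeComparable {V : Type*} (T : SimpleGraph V) (r u v : V) : Prop :=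
  IsAncestor T r u v ∨ IsAncestor T r v u

/-- `(T, r)` is a DFS tree of `G`. -/
def IsDFSTree {V : Type*} (G T : SimpleGraph V) (r : V) : Prop :=
  T ≤ G ∧ T.IsTree ∧ ∀ u v : V, G.Adj u v → TreeComparable T r u v

/-- The spanning subgraph obtained from `T` by deleting all edges with both endpoints in `D`
and adding the edges of `T'` (a graph on `D`). -/
def replaceSubtree {V : Type*} (T : SimpleGraph V) (D : Set V) (T' : SimpleGraph D) :
    SimpleGraph V where
  Adj a b := (T.Adj a b ∧ ¬ (a ∈ D ∧ b ∈ D)) ∨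
    ∃ (ha : a ∈ D) (hb : b ∈ D), T'.Adj ⟨a, ha⟩ ⟨b, hb⟩
  symm := by
    constructor
    rintro a b (⟨hab, hn⟩ | ⟨ha, hb, hab⟩)
    · exact Or.inl ⟨hab.symm, fun ⟨x, y⟩ => hn ⟨y, x⟩⟩
    · exact Or.inr ⟨hb, ha, hab.symm⟩
  loopless := by
    constructor
    rintro a (⟨hab, _⟩ | ⟨ha, hb, hab⟩)
    · exact hab.ne rfl
    · exact hab.ne rfl

section Aux

variable {V : Type*} {G : SimpleGraph V}

/-- In a tree, every path realizes the distance between its endpoints. -/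
lemma my_path_length (hG : G.IsTree) {a b : V} {p : G.Walk a b} (hp : p.IsPath) :
    p.length = G.dist a b := by
  obtain ⟨q, hq, hql⟩ := hG.isConnected.exists_path_of_dist a b
  rw [(hG.existsUnique_path a b).unique hp hq, hql]

/-- In a tree, a vertex lies on the (unique) path between `a` and `b` iff it is
metrically between them. -/
lemma my_mem_iff (hG : G.IsTree) {a b : V} {p : G.Walk a b} (hp : p.IsPath) (w : V) :
    w ∈ p.support ↔ G.dist a w + G.dist w b = G.dist a b := by
  classical
  constructor
  · intro hw
    have e1 := my_path_length hG (hp.takeUntil hw)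
    have e2 := my_path_length hG (hp.dropUntil hw)
    have e3 := my_path_length hG hp
    have e4 := congrArg SimpleGraph.Walk.length (p.take_spec hw)
    rw [SimpleGraph.Walk.length_append] at e4
    omega
  · intro hw
    obtain ⟨p1, hp1, hl1⟩ := hG.isConnected.exists_path_of_dist a w
    obtain ⟨p2, hp2, hl2⟩ := hG.isConnected.exists_path_of_dist w b
    have hl : (p1.append p2).length = G.dist a b := by
      rw [SimpleGraph.Walk.length_append]; omega
    have hP : (p1.append p2).IsPath := (p1.append p2).isPath_of_length_eq_dist hl
    have heq := (hG.existsUnique_path a b).unique hP hp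
    rw [← heq]
    exact (SimpleGraph.Walk.mem_support_append_iff _ _).mpr (Or.inl p1.end_mem_support)

/-- Two vertices on a common path from `r` are comparable. -/
lemma my_comparable (hG : G.IsTree) {r u w x : V} {p : G.Walk r u} (hp : p.IsPath)
    (hw : w ∈ p.support) (hx : x ∈ p.support) :
    G.dist r w + G.dist w x = G.dist r x ∨ G.dist r x + G.dist x w = G.dist r w := by
  classical
  by_cases hwx : w ∈ (p.takeUntil x hx).support
  · exact Or.inl ((my_mem_iff hG (hp.takeUntil hx) w).mp hwx)
  · right
    have hw' : w ∈ (p.dropUntil x hx).support := by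
      have h1 : w ∈ (p.takeUntil x hx).support ∨ w ∈ (p.dropUntil x hx).support := by
        rw [← SimpleGraph.Walk.mem_support_append_iff, p.take_spec hx]; exact hw
      tauto
    have hbtw := (my_mem_iff hG (hp.dropUntil hx) w).mp hw'
    have hxu := (my_mem_iff hG hp x).mp hx
    have t1 : G.dist r w ≤ G.dist r x + G.dist x w := hG.isConnected.dist_triangle
    have t2 : G.dist r u ≤ G.dist r w + G.dist w u := hG.isConnected.dist_triangle
    omega

lemma my_lift_out {T : SimpleGraph V} {D : Set V} {T' : SimpleGraph D} :
    ∀ {a b : V} (p : T.Walk a b), (∀ x ∈ p.support, x ∈ D → x = b) →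
    ∃ q : (replaceSubtree T D T').Walk a b, q.support = p.support ∧ q.edges = p.edges := by
  intro a b p
  induction p with
  | nil => exact fun _ => ⟨SimpleGraph.Walk.nil, rfl, rfl⟩
  | @cons a c b h q ih =>
    intro hcond
    obtain ⟨q', hs, he⟩ := ih (fun x hx hxD =>
      hcond x (by rw [SimpleGraph.Walk.support_cons]; exact List.mem_cons_of_mem _ hx) hxD)
    have hadj : (replaceSubtree T D T').Adj a c := by
      refine Or.inl ⟨h, ?_⟩
      rintro ⟨haD, hcD⟩
      have h1 := hcond a (by simp [SimpleGraph.Walk.support_cons]) haD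
      have h2 := hcond c (by rw [SimpleGraph.Walk.support_cons]; exact List.mem_cons_of_mem _ q.start_mem_support) hcD
      exact h.ne (h1.trans h2.symm)
    exact ⟨SimpleGraph.Walk.cons hadj q',
      by simp [SimpleGraph.Walk.support_cons, hs],
      by simp [SimpleGraph.Walk.edges_cons, he]⟩

lemma my_drop_out {T : SimpleGraph V} {D : Set V} {T' : SimpleGraph D} :
    ∀ {a b : V} (p : (replaceSubtree T D T').Walk a b), (∀ x ∈ p.support, x ∉ D) →
    ∃ q : T.Walk a b, q.support = p.support ∧ q.edges = p.edges := by
  intro a b p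
  induction p with
  | nil => exact fun _ => ⟨SimpleGraph.Walk.nil, rfl, rfl⟩
  | @cons a c b h q ih =>
    intro hcond
    obtain ⟨q', hs, he⟩ := ih (fun x hx =>
      hcond x (by rw [SimpleGraph.Walk.support_cons]; exact List.mem_cons_of_mem _ hx))
    have hadj : T.Adj a c := by
      rcases id h with ⟨h1, -⟩ | ⟨haD, -, -⟩
      · exact h1
      · exact absurd haD (hcond a (by simp [SimpleGraph.Walk.support_cons]))
    exact ⟨SimpleGraph.Walk.cons hadj q',
      by simp [SimpleGraph.Walk.support_cons, hs],
      by simp [SimpleGraph.Walk.edges_cons, he]⟩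

lemma my_drop_in {T : SimpleGraph V} {D : Set V} {T' : SimpleGraph D} :
    ∀ {a b : V} (p : (replaceSubtree T D T').Walk a b), (∀ x ∈ p.support, x ∈ D) →
    ∀ (ha : a ∈ D) (hb : b ∈ D),
    ∃ q : T'.Walk ⟨a, ha⟩ ⟨b, hb⟩, q.support.map Subtype.val = p.support ∧
      q.edges.map (Sym2.map Subtype.val) = p.edges := by
  intro a b p
  induction p with
  | nil => exact fun _ _ _ => ⟨SimpleGraph.Walk.nil, rfl, rfl⟩
  | @cons a c b h q ih =>
    intro hsup ha hb
    have hcD : c ∈ D := hsup c (by rw [SimpleGraph.Walk.support_cons]; exact List.mem_cons_of_mem _ q.start_mem_support)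
    have hadj : T'.Adj ⟨a, ha⟩ ⟨c, hcD⟩ := by
      rcases id h with ⟨-, hn⟩ | ⟨ha', hc', hT'⟩
      · exact absurd ⟨ha, hcD⟩ hn
      · exact hT'
    obtain ⟨q', hs, he⟩ := ih (fun x hx =>
      hsup x (by rw [SimpleGraph.Walk.support_cons]; exact List.mem_cons_of_mem _ hx)) hcD hb
    exact ⟨SimpleGraph.Walk.cons hadj q',
      by simp [SimpleGraph.Walk.support_cons, hs],
      by simp [SimpleGraph.Walk.edges_cons, he, Sym2.map_pair_eq]⟩

lemma my_mem_tail {G : SimpleGraph V} {x y : V} (c : G.Walk x x) (hne : c ≠ SimpleGraph.Walk.nil)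
    (hy : y ∈ c.support) : y ∈ c.support.tail := by
  cases c with
  | nil => exact absurd rfl hne
  | cons h q =>
    rw [SimpleGraph.Walk.support_cons] at hy ⊢
    rw [List.tail_cons]
    rcases List.mem_cons.mp hy with rfl | hy'
    · exact q.end_mem_support
    · exact hy'

end Aux

/-- Let `(T,r)` be a DFS tree of `G`, `v` a vertex with descendant set `D_v`, and `(T'_v, v)`
any DFS tree of `G[D_v]` rooted at `v`. Then replacing in `T` the edges inside `D_v` by the
edges of `T'_v` yields again a spanning tree of `G` which, rooted at `r`, is a DFS tree of
`G`. -/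
theorem my_main {V : Type*} [Fintype V] (G T : SimpleGraph V) (r v : V)
    (D : Set V) (hDdef : D = {u : V | IsAncestor T r v u})
    (T' : SimpleGraph D) (hvD : v ∈ D)
    (h : IsDFSTree G T r)
    (h' : IsDFSTree (G.induce D) T' ⟨v, hvD⟩) :
    IsDFSTree G (replaceSubtree T D T') r := by
  classical
  obtain ⟨hTG, hT, hcomp⟩ := h
  obtain ⟨hT'G, hT', hcomp'⟩ := h'
  set S : SimpleGraph V := replaceSubtree T D T' with hSdef
  have hc := hT.isConnected
  have hc' := hT'.isConnected
  have hzero : ∀ {a b : V}, T.dist a b = 0 → a = b :=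
    fun h => hc.dist_eq_zero_iff.mp h
  have htri : ∀ a b c : V, T.dist a c ≤ T.dist a b + T.dist b c :=
    fun _ _ _ => hc.dist_triangle
  have hmemD : ∀ {x : V}, x ∈ D ↔ T.dist r v + T.dist v x = T.dist r x := by
    intro x; rw [hDdef]; exact Iff.rfl
  have htrans : ∀ {x u : V}, x ∈ D → T.dist r x + T.dist x u = T.dist r u → u ∈ D := by
    intro x u hx hxu
    have h1 : T.dist r v + T.dist v x = T.dist r x := hmemD.mp hx
    have t1 := htri v x u
    have t2 := htri r v u
    rw [hmemD]
    omega
  have hanti : ∀ {x u : V}, T.dist r x + T.dist x u = T.dist r u →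
      T.dist r u + T.dist u x = T.dist r x → x = u := by
    intro x u h1 h2
    have hcm : T.dist x u = T.dist u x := T.dist_comm
    exact hzero (show T.dist x u = 0 by omega)
  -- boundary edges of S
  have hbnd : ∀ {a b : V}, S.Adj a b → a ∈ D → b ∉ D →
      a = v ∧ (T.dist r b + T.dist b v = T.dist r v) ∧ T.dist r b + 1 = T.dist r v := by
    intro a b hab haD hbD
    have hTab : T.Adj a b := by
      rcases hab with ⟨h1, -⟩ | ⟨-, hbD', -⟩
      · exact h1
      · exact absurd hbD' hbD
    have hGab : G.Adj a b := hTG hTab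
    have hdab : T.dist a b = 1 := SimpleGraph.dist_eq_one_iff_adj.mpr hTab
    have hdba : T.dist b a = 1 := by rw [T.dist_comm]; exact hdab
    have hba : T.dist r b + T.dist b a = T.dist r a := by
      rcases hcomp a b hGab with h1 | h1
      · exact absurd (htrans haD h1) hbD
      · exact h1
    obtain ⟨pa, hpa, -⟩ := hc.exists_path_of_dist r a
    have hbmem : b ∈ pa.support := (my_mem_iff hT hpa b).mpr hba
    have hvmem : v ∈ pa.support := (my_mem_iff hT hpa v).mpr (hmemD.mp haD)
    have hbv : T.dist r b + T.dist b v = T.dist r v := by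
      rcases my_comparable hT hpa hbmem hvmem with h1 | h1
      · exact h1
      · exact absurd (hmemD.mpr h1) hbD
    have hDa := hmemD.mp haD
    have haeq : a = v := by
      have h0 : T.dist b v = 0 ∨ T.dist v a = 0 := by omega
      rcases h0 with h0 | h0
      · exact absurd (hzero h0) (fun hbveq => hbD (hbveq ▸ hvD))
      · exact (hzero h0).symm
    refine ⟨haeq, hbv, ?_⟩
    rw [← haeq]; omega
  have hparent_unique : ∀ {w1 w2 : V},
      (T.dist r w1 + T.dist w1 v = T.dist r v) → T.dist r w1 + 1 = T.dist r v →
      (T.dist r w2 + T.dist w2 v = T.dist r v) → T.dist r w2 + 1 = T.dist r v → w1 = w2 := by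
    intro w1 w2 h1 h2 h3 h4
    obtain ⟨pv, hpv, -⟩ := hc.exists_path_of_dist r v
    have m1 : w1 ∈ pv.support := (my_mem_iff hT hpv w1).mpr h1
    have m2 : w2 ∈ pv.support := (my_mem_iff hT hpv w2).mpr h3
    rcases my_comparable hT hpv m1 m2 with h5 | h5
    · exact hzero (show T.dist w1 w2 = 0 by omega)
    · exact (hzero (show T.dist w2 w1 = 0 by omega)).symm
  -- any S-walk from inside D to outside D uses the unique boundary edge
  have hcross : ∀ {a b : V} (p : S.Walk a b), a ∈ D → b ∉ D →
      ∃ w, (T.dist r w + T.dist w v = T.dist r v) ∧ T.dist r w + 1 = T.dist r v ∧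
        s(v, w) ∈ p.edges := by
    intro a b p
    induction p with
    | nil => exact fun ha hb => absurd ha hb
    | @cons a c b hadj q ih =>
      intro ha hb
      by_cases hcD : c ∈ D
      · obtain ⟨w, hw1, hw2, hw3⟩ := ih hcD hb
        exact ⟨w, hw1, hw2, by rw [SimpleGraph.Walk.edges_cons]; exact List.mem_cons_of_mem _ hw3⟩
      · obtain ⟨hav, hw1, hw2⟩ := hbnd hadj ha hcD
        subst hav
        exact ⟨c, hw1, hw2, by rw [SimpleGraph.Walk.edges_cons]; exact List.mem_cons_self⟩
  -- canonical S-paths from r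
  have hsig_out : ∀ (u : V), u ∉ D → ∃ σ : S.Walk r u, σ.IsPath ∧
      ∀ x, T.dist r x + T.dist x u = T.dist r u → x ∈ σ.support := by
    intro u hu
    obtain ⟨p, hp, -⟩ := hc.exists_path_of_dist r u
    obtain ⟨q, hqs, hqe⟩ := my_lift_out (T' := T') p (fun x hxs hxD =>
      absurd (htrans hxD ((my_mem_iff hT hp x).mp hxs)) hu)
    refine ⟨q, ?_, fun x hx => ?_⟩
    · rw [SimpleGraph.Walk.isPath_def, hqs]; exact hp.support_nodup
    · rw [hqs]; exact (my_mem_iff hT hp x).mpr hx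
  have hsig_in : ∀ (u : V) (hu : u ∈ D), ∃ σ : S.Walk r u, σ.IsPath ∧
      ((∀ x, T.dist r x + T.dist x v = T.dist r v → x ∈ σ.support) ∧
      (∀ x (hx : x ∈ D), T'.dist ⟨v, hvD⟩ ⟨x, hx⟩ + T'.dist ⟨x, hx⟩ ⟨u, hu⟩ =
        T'.dist ⟨v, hvD⟩ ⟨u, hu⟩ → x ∈ σ.support)) := by
    intro u hu
    obtain ⟨p, hp, -⟩ := hc.exists_path_of_dist r v
    have hpcond : ∀ x ∈ p.support, x ∈ D → x = v :=
      fun x hx hxD => hanti ((my_mem_iff hT hp x).mp hx) (hmemD.mp hxD)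
    obtain ⟨q1, hq1s, -⟩ := my_lift_out (T' := T') p hpcond
    have hq1path : q1.IsPath := by
      rw [SimpleGraph.Walk.isPath_def, hq1s]; exact hp.support_nodup
    obtain ⟨p', hp', -⟩ := hc'.exists_path_of_dist ⟨v, hvD⟩ ⟨u, hu⟩
    let φ : T' →g S := ⟨Subtype.val, fun {x y} hxy => Or.inr ⟨x.2, y.2, hxy⟩⟩
    have hmpath : (p'.map φ).IsPath :=
      SimpleGraph.Walk.map_isPath_of_injective
        (f := φ) (show Function.Injective Subtype.val from Subtype.val_injective) hp'
    have hmsup : (p'.map φ).support = p'.support.map Subtype.val :=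
      SimpleGraph.Walk.support_map φ p'
    have hmD : ∀ x ∈ (p'.map φ).support, x ∈ D := by
      intro x hx
      rw [hmsup] at hx
      obtain ⟨x', -, rfl⟩ := List.mem_map.mp hx
      exact x'.2
    refine ⟨q1.append (p'.map φ), ?_, fun x hx => ?_, fun x hx hxd => ?_⟩
    · rw [SimpleGraph.Walk.isPath_def, SimpleGraph.Walk.support_append, List.nodup_append]
      refine ⟨hq1path.support_nodup, hmpath.support_nodup.tail, ?_⟩
      intro x hx1 y hx2 hxy
      subst hxy
      have hx1' : x ∈ p.support := by rw [← hq1s]; exact hx1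
      have hxD : x ∈ D := hmD x (List.mem_of_mem_tail hx2)
      have hxv : x = v := hpcond x hx1' hxD
      subst hxv
      have : ¬ x ∈ (p'.map φ).support.tail := by
        have h5 := hmpath.support_nodup
        rw [(p'.map φ).support_eq_cons] at h5
        exact (List.nodup_cons.mp h5).1
      exact this hx2
    · refine (SimpleGraph.Walk.mem_support_append_iff _ _).mpr (Or.inl ?_)
      rw [hq1s]; exact (my_mem_iff hT hp x).mpr hx
    · refine (SimpleGraph.Walk.mem_support_append_iff _ _).mpr (Or.inr ?_)
      have hm : (⟨x, hx⟩ : D) ∈ p'.support := (my_mem_iff hT' hp' _).mpr hxd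
      rw [hmsup]
      exact List.mem_map_of_mem hm
  -- S is connected
  have hreach : ∀ u, S.Reachable r u := by
    intro u
    by_cases hu : u ∈ D
    · obtain ⟨σ, -, -⟩ := hsig_in u hu; exact ⟨σ⟩
    · obtain ⟨σ, -, -⟩ := hsig_out u hu; exact ⟨σ⟩
  have hSconn : S.Connected := by
    have : Nonempty V := ⟨r⟩
    exact ⟨fun a b => (hreach a).symm.trans (hreach b)⟩
  -- S is acyclic
  have hSacyc : S.IsAcyclic := by
    intro x c hcyc
    have h3 := hcyc.three_le_length
    by_cases hall : ∀ y ∈ c.support, y ∈ D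
    · have hxD : x ∈ D := hall x c.start_mem_support
      obtain ⟨q, hqs, hqe⟩ := my_drop_in c hall hxD hxD
      refine SimpleGraph.IsTree.IsAcyclic hT' q ?_
      rw [SimpleGraph.Walk.isCycle_def] at hcyc ⊢
      obtain ⟨ht, -, hnd⟩ := hcyc
      refine ⟨?_, ?_, ?_⟩
      · rw [SimpleGraph.Walk.isTrail_def] at ht ⊢
        rw [← hqe] at ht
        exact ht.of_map _
      · intro h0
        rw [h0] at hqe
        simp only [SimpleGraph.Walk.edges_nil, List.map_nil] at hqe
        have := c.length_edges
        rw [← hqe] at this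
        simp at this
        omega
      · have heq : c.support.tail = q.support.tail.map Subtype.val := by
          rw [← hqs, List.map_tail]
        rw [heq] at hnd
        exact hnd.of_map _
    · by_cases hall2 : ∀ y ∈ c.support, y ∉ D
      · obtain ⟨q, hqs, hqe⟩ := my_drop_out c hall2
        refine SimpleGraph.IsTree.IsAcyclic hT q ?_
        rw [SimpleGraph.Walk.isCycle_def] at hcyc ⊢
        obtain ⟨ht, -, hnd⟩ := hcyc
        refine ⟨?_, ?_, ?_⟩
        · rw [SimpleGraph.Walk.isTrail_def] at ht ⊢; rw [hqe]; exact ht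
        · intro h0
          rw [h0] at hqe
          have := c.length_edges
          rw [← hqe] at this
          simp at this
          omega
        · rw [hqs]; exact hnd
      · push_neg at hall hall2
        obtain ⟨y, hys, hyD⟩ := hall
        obtain ⟨x0, hx0s, hx0D⟩ := hall2
        have hcyc' := hcyc.rotate hx0s
        have hnenil : c ≠ SimpleGraph.Walk.nil := hcyc.ne_nil
        have hys' : y ∈ (c.rotate x0 hx0s).support := by
          have h1 : y ∈ c.support.tail := my_mem_tail c hnenil hys
          have h2 := (SimpleGraph.Walk.support_rotate c x0 hx0s).mem_iff.mpr h1
          exact List.mem_of_mem_tail h2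
        set c' := c.rotate x0 hx0s with hc'def
        have hq12 := c'.take_spec hys'
        obtain ⟨w1, hw11, hw12, hw13⟩ := hcross (c'.takeUntil y hys') hx0D hyD
        obtain ⟨w2, hw21, hw22, hw23⟩ := hcross (c'.dropUntil y hys').reverse hx0D hyD
        have hw : w1 = w2 := hparent_unique hw11 hw12 hw21 hw22
        have hw23' : s(v, w2) ∈ (c'.dropUntil y hys').edges := by
          rw [SimpleGraph.Walk.edges_reverse] at hw23
          exact List.mem_reverse.mp hw23
        have htrail : c'.IsTrail := hcyc'.isTrail
        have hedges : c'.edges = (c'.takeUntil y hys').edges ++ (c'.dropUntil y hys').edges := by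
          rw [← SimpleGraph.Walk.edges_append, hq12]
        have hnd := htrail.edges_nodup
        rw [hedges] at hnd
        exact (List.disjoint_of_nodup_append hnd) hw13 (hw ▸ hw23')
  have hStree : S.IsTree := ⟨hSconn, hSacyc⟩
  refine ⟨?_, hStree, ?_⟩
  · intro a b hab
    rcases hab with ⟨h1, -⟩ | ⟨ha, hb, h2⟩
    · exact hTG h1
    · have := hT'G h2
      simpa using this
  · have hSanc : ∀ {x u : V} (σ : S.Walk r u), σ.IsPath → x ∈ σ.support → IsAncestor S r x u :=
      fun σ hσ hx => (my_mem_iff hStree hσ _).mp hx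
    have hmix : ∀ u w, G.Adj u w → u ∈ D → w ∉ D → IsAncestor S r w u := by
      intro u w hG' hu hw
      have hTanc : T.dist r w + T.dist w u = T.dist r u := by
        rcases hcomp u w hG' with h1 | h1
        · exact absurd (htrans hu h1) hw
        · exact h1
      obtain ⟨p, hp, -⟩ := hc.exists_path_of_dist r u
      have hwm : w ∈ p.support := (my_mem_iff hT hp w).mpr hTanc
      have hvm : v ∈ p.support := (my_mem_iff hT hp v).mpr (hmemD.mp hu)
      have hwv : T.dist r w + T.dist w v = T.dist r v := by
        rcases my_comparable hT hp hwm hvm with h1 | h1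
        · exact h1
        · exact absurd (hmemD.mpr h1) hw
      obtain ⟨σ, hσ, hσ1, -⟩ := hsig_in u hu
      exact hSanc σ hσ (hσ1 w hwv)
    intro u w hG'
    by_cases hu : u ∈ D <;> by_cases hw : w ∈ D
    · have hind : (G.induce D).Adj ⟨u, hu⟩ ⟨w, hw⟩ := by simpa using hG'
      obtain ⟨σu, hσu, -, hσu2⟩ := hsig_in u hu
      obtain ⟨σw, hσw, -, hσw2⟩ := hsig_in w hw
      rcases hcomp' _ _ hind with h1 | h1
      · exact Or.inl (hSanc σw hσw (hσw2 u hu h1))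
      · exact Or.inr (hSanc σu hσu (hσu2 w hw h1))
    · exact Or.inr (hmix u w hG' hu hw)
    · exact Or.inl (hmix w u hG'.symm hw hu)
    · obtain ⟨σu, hσu, hσu1⟩ := hsig_out u hu
      obtain ⟨σw, hσw, hσw1⟩ := hsig_out w hw
      rcases hcomp u w hG' with h1 | h1
      · exact Or.inl (hSanc σw hσw (hσw1 u h1))
      · exact Or.inr (hSanc σu hσu (hσu1 w h1))

theorem stmt8 {V : Type*} [Fintype V] (G T : SimpleGraph V) (r : V)
    (h : IsDFSTree G T r) (v : V)
    (T' : SimpleGraph {u : V | IsAncestor T r v u})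
    (h' : IsDFSTree (G.induce {u : V | IsAncestor T r v u}) T'
      ⟨v, by simp [IsAncestor]⟩) :
    IsDFSTree G (replaceSubtree T {u : V | IsAncestor T r v u} T') r :=
  my_main G T r v _ rfl T' (by simp [IsAncestor]) h h'
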